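/- In the hump decomposition of a chain C: if H₁ precedes H₂ and cost(H₁) ≥ 0, then cost(H₂) ≥ 0 and fall(H₁) > fall(H₂); if cost(H₂) < 0, then cost(H₁) < 0 and height(H₁) < height(H₂). -/

import Mathlib

def cost (L : List ℤ) : ℤ := L.sum

def height (L : List ℤ) : ℤ :=
  ((List.range (L.length + 1)).map fun k => (L.take k).sum).foldr max 0

def fall (L : List ℤ) : ℤ := height L - cost L

/-- `H` is a hump: it has a useful peak at index `k`. -/
def IsHump (H : List ℤ) : Prop :=
  H ≠ [] ∧ ∃ k < H.length,
    (∀ m < H.length, (H.take (m + 1)).sum ≤ (H.take (k + 1)).sum) ∧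
    (∀ m < k, 0 ≤ (H.take (m + 1)).sum) ∧
    (∀ m, k < m → m < H.length → cost H ≤ (H.take (m + 1)).sum)

/-- Monotonicity property of the canonical hump decomposition. -/
def StdMono (H₁ H₂ : List ℤ) : Prop :=
  (0 ≤ cost H₁ → 0 ≤ cost H₂ ∧ fall H₂ < fall H₁) ∧
  (cost H₂ < 0 → cost H₁ < 0 ∧ height H₁ < height H₂)

/-- `D` is the canonical hump decomposition of the chain `C`: a partition into
consecutive humps, no two adjacent of which can be merged into a single hump,
satisfying the monotonicity properties. -/
def IsDecomp (C : List ℤ) (D : List (List ℤ)) : Prop :=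
  D.flatten = C ∧ (∀ H ∈ D, IsHump H) ∧ D.Pairwise StdMono ∧
    List.Chain' (fun H₁ H₂ => ¬ IsHump (H₁ ++ H₂)) D

-- aux lemmas
lemma le_foldr_max {l : List ℤ} {x : ℤ} (hx : x ∈ l) : x ≤ l.foldr max 0 := by
  induction l with
  | nil => simp at hx
  | cons a l ih =>
    rcases List.mem_cons.mp hx with h | h
    · subst h; exact le_max_left _ _
    · exact le_trans (ih h) (le_max_right _ _)

lemma foldr_max_nonneg (l : List ℤ) : 0 ≤ l.foldr max 0 := by
  induction l with
  | nil => simp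
  | cons a l ih => exact le_trans ih (le_max_right _ _)

lemma foldr_max_le {l : List ℤ} {B : ℤ} (h0 : 0 ≤ B) (h : ∀ x ∈ l, x ≤ B) :
    l.foldr max 0 ≤ B := by
  induction l with
  | nil => simpa
  | cons a l ih =>
    exact max_le (h a (List.mem_cons_self)) (ih fun x hx => h x (List.mem_cons_of_mem _ hx))

lemma le_height (L : List ℤ) (k : ℕ) (hk : k ≤ L.length) : (L.take k).sum ≤ height L := by
  apply le_foldr_max
  exact List.mem_map.mpr ⟨k, List.mem_range.mpr (by omega), rfl⟩

lemma height_nonneg (L : List ℤ) : 0 ≤ height L := foldr_max_nonneg _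

lemma height_le {L : List ℤ} {B : ℤ} (h0 : 0 ≤ B)
    (h : ∀ k ≤ L.length, (L.take k).sum ≤ B) : height L ≤ B := by
  apply foldr_max_le h0
  intro x hx
  obtain ⟨k, hk, rfl⟩ := List.mem_map.mp hx
  exact h k (by have := List.mem_range.mp hk; omega)

lemma hump_height {H : List ℤ} {k : ℕ} (hk : k < H.length)
    (hmax : ∀ m < H.length, (H.take (m + 1)).sum ≤ (H.take (k + 1)).sum) :
    height H = max ((H.take (k + 1)).sum) 0 := by
  apply le_antisymm
  · apply height_le (le_max_right _ _)
    intro j hj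
    match j with
    | 0 => simp
    | m + 1 => exact le_max_of_le_left (hmax m (by omega))
  · exact max_le (le_height H (k + 1) (by omega)) (height_nonneg H)

lemma sum_take_append (H₁ H₂ : List ℤ) (n : ℕ) :
    ((H₁ ++ H₂).take n).sum = (H₁.take n).sum + (H₂.take (n - H₁.length)).sum := by
  rw [List.take_append, List.sum_append]

lemma stdMono_of_not_merge {H₁ H₂ : List ℤ} (h1 : IsHump H₁) (h2 : IsHump H₂)
    (hm : ¬ IsHump (H₁ ++ H₂)) : StdMono H₁ H₂ := by
  obtain ⟨hne₁, k₁, hk₁, f1, f2, f3⟩ := h1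
  obtain ⟨hne₂, k₂, hk₂, g1, g2, g3⟩ := h2
  set n₁ := H₁.length with hn1def
  set n₂ := H₂.length with hn2def
  set p₁ := (H₁.take (k₁ + 1)).sum with hp1def
  set p₂ := (H₂.take (k₂ + 1)).sum with hp2def
  have hn₁ : 0 < n₁ := List.length_pos_iff.mpr hne₁
  have hn₂ : 0 < n₂ := List.length_pos_iff.mpr hne₂
  have hc₁p : cost H₁ ≤ p₁ := by
    have h := f1 (n₁ - 1) (by omega)
    have e : n₁ - 1 + 1 = n₁ := by omega
    rw [e, hn1def, List.take_length] at h
    exact h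
  have hc₂p : cost H₂ ≤ p₂ := by
    have h := g1 (n₂ - 1) (by omega)
    have e : n₂ - 1 + 1 = n₂ := by omega
    rw [e, hn2def, List.take_length] at h
    exact h
  -- prefix facts over arbitrary prefix length j
  have head₂ : ∀ j ≤ k₂, 0 ≤ (H₂.take j).sum := by
    intro j hj
    match j with
    | 0 => simp
    | m + 1 => exact g2 m (by omega)
  have tail₂ : ∀ j, k₂ < j → j ≤ n₂ → cost H₂ ≤ (H₂.take j).sum := by
    intro j hj hj'
    match j with
    | 0 => omega
    | m + 1 =>
      rcases eq_or_lt_of_le (Nat.le_of_lt_succ hj) with h | h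
      · rw [← h]; exact hc₂p
      · exact g3 m h (by omega)
  have allge₂ : cost H₂ ≤ 0 → ∀ j ≤ n₂, cost H₂ ≤ (H₂.take j).sum := by
    intro hc j hj
    rcases le_or_gt j k₂ with h | h
    · exact le_trans hc (head₂ j h)
    · exact tail₂ j h hj
  have maxpref₂ : ∀ j, 1 ≤ j → j ≤ n₂ → (H₂.take j).sum ≤ p₂ := by
    intro j h1 hj
    match j with
    | m + 1 => exact g1 m (by omega)
  have head₁ : ∀ j ≤ k₁, 0 ≤ (H₁.take j).sum := by
    intro j hj
    match j with
    | 0 => simp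
    | m + 1 => exact f2 m (by omega)
  have tail₁ : ∀ j, k₁ < j → j ≤ n₁ → cost H₁ ≤ (H₁.take j).sum := by
    intro j hj hj'
    match j with
    | 0 => omega
    | m + 1 =>
      rcases eq_or_lt_of_le (Nat.le_of_lt_succ hj) with h | h
      · rw [← h]; exact hc₁p
      · exact f3 m h (by omega)
  have allpref₁ : 0 ≤ cost H₁ → ∀ j ≤ n₁, 0 ≤ (H₁.take j).sum := by
    intro hc j hj
    rcases le_or_gt j k₁ with h | h
    · exact head₁ j h
    · exact le_trans hc (tail₁ j h hj)
  have S : ∀ n, ((H₁ ++ H₂).take n).sum = (H₁.take n).sum + (H₂.take (n - n₁)).sum :=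
    fun n => sum_take_append H₁ H₂ n
  have costApp : cost (H₁ ++ H₂) = cost H₁ + cost H₂ := List.sum_append
  have lenApp : (H₁ ++ H₂).length = n₁ + n₂ := List.length_append
  -- generic prefix computation
  have Slo : ∀ j ≤ n₁, ((H₁ ++ H₂).take j).sum = (H₁.take j).sum := by
    intro j hj
    rw [S j]
    have e : j - n₁ = 0 := by omega
    rw [e]; simp
  have Shi : ∀ j, n₁ ≤ j → ((H₁ ++ H₂).take j).sum = cost H₁ + (H₂.take (j - n₁)).sum := by
    intro j hj
    rw [S j]
    congr 1
    rw [List.take_of_length_le (by omega)]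
    rfl
  -- merge with peak in H₁ at k₁
  have mergeB : cost H₂ ≤ 0 → cost H₁ + p₂ ≤ p₁ → False := by
    intro hc2 hpp
    apply hm
    refine ⟨by simp [hne₁], k₁, by rw [lenApp]; omega, ?_, ?_, ?_⟩
    · intro m hm'
      rw [lenApp] at hm'
      rw [Slo (k₁ + 1) (by omega)]
      rcases le_or_gt (m + 1) n₁ with h | h
      · rw [Slo (m + 1) h]; exact f1 m (by omega)
      · rw [Shi (m + 1) (by omega)]
        have := maxpref₂ (m + 1 - n₁) (by omega) (by omega)
        linarith
    · intro m hm'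
      rw [Slo (m + 1) (by omega)]
      exact f2 m hm'
    · intro m hm1 hm2
      rw [lenApp] at hm2
      rw [costApp]
      rcases le_or_gt (m + 1) n₁ with h | h
      · rw [Slo (m + 1) h]
        have := tail₁ (m + 1) (by omega) h
        linarith
      · rw [Shi (m + 1) (by omega)]
        have := allge₂ hc2 (m + 1 - n₁) (by omega)
        linarith
  -- merge with peak in H₂ at n₁ + k₂
  have mergeC : 0 ≤ cost H₁ → p₁ ≤ cost H₁ + p₂ → False := by
    intro hc1 hpp
    apply hm
    refine ⟨by simp [hne₁], n₁ + k₂, by rw [lenApp]; omega, ?_, ?_, ?_⟩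
    · intro m hm'
      rw [lenApp] at hm'
      have epk : n₁ + k₂ + 1 - n₁ = k₂ + 1 := by omega
      rw [Shi (n₁ + k₂ + 1) (by omega), epk]
      rcases le_or_gt (m + 1) n₁ with h | h
      · rw [Slo (m + 1) h]
        have := f1 m (by omega)
        linarith
      · rw [Shi (m + 1) (by omega)]
        have := maxpref₂ (m + 1 - n₁) (by omega) (by omega)
        linarith
    · intro m hm'
      rcases le_or_gt (m + 1) n₁ with h | h
      · rw [Slo (m + 1) h]
        exact allpref₁ hc1 (m + 1) h
      · rw [Shi (m + 1) (by omega)]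
        have := head₂ (m + 1 - n₁) (by omega)
        linarith
    · intro m hm1 hm2
      rw [lenApp] at hm2
      rw [costApp, Shi (m + 1) (by omega)]
      have := tail₂ (m + 1 - n₁) (by omega) (by omega)
      linarith
  have hgt1 : height H₁ = max p₁ 0 := hump_height hk₁ f1
  have hgt2 : height H₂ = max p₂ 0 := hump_height hk₂ g1
  have part1pos : 0 ≤ cost H₁ → 0 ≤ cost H₂ := by
    intro hc1
    by_contra h
    push_neg at h
    rcases le_or_gt (cost H₁ + p₂) p₁ with hle | hlt
    · exact mergeB h.le hle
    · exact mergeC hc1 hlt.le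
  constructor
  · intro hc1
    have hc2 := part1pos hc1
    refine ⟨hc2, ?_⟩
    by_contra hf
    push_neg at hf
    have hp1 : 0 ≤ p₁ := le_trans hc1 hc₁p
    have hp2 : 0 ≤ p₂ := le_trans hc2 hc₂p
    apply mergeC hc1
    have e1 : fall H₁ = p₁ - cost H₁ := by
      simp [fall, hgt1, max_eq_left hp1]
    have e2 : fall H₂ = p₂ - cost H₂ := by
      simp [fall, hgt2, max_eq_left hp2]
    rw [e1, e2] at hf
    linarith
  · intro hc2
    have hc1 : cost H₁ < 0 := by
      by_contra h
      push_neg at h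
      exact absurd (part1pos h) (not_le.mpr hc2)
    refine ⟨hc1, ?_⟩
    by_contra hh
    push_neg at hh
    rw [hgt1, hgt2] at hh
    apply mergeB hc2.le
    rcases le_or_gt p₂ 0 with h2 | h2
    · linarith
    · rw [max_eq_left h2.le] at hh
      rcases le_or_gt p₁ 0 with h1 | h1
      · rw [max_eq_right h1] at hh; linarith
      · rw [max_eq_left h1.le] at hh; linarith

lemma stdMono_trans {A B C : List ℤ} (h1 : StdMono A B) (h2 : StdMono B C) : StdMono A C := by
  obtain ⟨h1a, h1b⟩ := h1
  obtain ⟨h2a, h2b⟩ := h2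
  constructor
  · intro hc
    obtain ⟨hb, hf⟩ := h1a hc
    obtain ⟨hc', hf'⟩ := h2a hb
    exact ⟨hc', lt_trans hf' hf⟩
  · intro hc
    obtain ⟨hb, hh⟩ := h2b hc
    obtain ⟨hc', hh'⟩ := h1b hb
    exact ⟨hc', lt_trans hh' hh⟩

/-- Monotonicity of the greedy (maximal-hump) decomposition. -/
theorem decomp_monotone (C : List ℤ) (D : List (List ℤ))
    (hjoin : D.flatten = C) (hhump : ∀ H ∈ D, IsHump H)
    (hmax : List.Chain' (fun H₁ H₂ => ¬ IsHump (H₁ ++ H₂)) D) :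
    D.Pairwise StdMono := by
  clear hjoin
  induction D with
  | nil => exact List.Pairwise.nil
  | cons H D ih =>
    have hhump' : ∀ H' ∈ D, IsHump H' := fun H' h => hhump H' (List.mem_cons_of_mem _ h)
    have pd := ih hhump' hmax.tail
    refine List.Pairwise.cons ?_ pd
    intro H' hH'
    match D, hH' with
    | H₂ :: D', hH' =>
      have hadj : ¬ IsHump (H ++ H₂) := List.isChain_cons_cons.mp hmax |>.1
      have hm12 : StdMono H H₂ :=
        stdMono_of_not_merge (hhump H (List.mem_cons_self))
          (hhump' H₂ (List.mem_cons_self)) hadj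
      rcases List.mem_cons.mp hH' with h | h
      · subst h; exact hm12
      · exact stdMono_trans hm12 (List.rel_of_pairwise_cons pd h)
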